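/- arXiv:1807.11341 — 2 statements merged into one kernel-verified Lean document; each statement's English description precedes it below -/
import Mathlib

section
/- Let Γ be a Lie group acting properly on a manifold P, let G' be a closed normal subgroup of Γ, and suppose the quotients P/G' = M' and Γ/G' = [G] exist as smooth manifolds with the induced action of [G] on M' given by π'(p)·[g] = π'(p·g). If the Γ-action on P is proper and π' admits local sections, then the induced [G]-action on M' is proper. -/
/-- Let a (Lie) group `Γ` act continuously and properly on `P`, let `G'` be a closed
normal subgroup, `π' : P → M' = P/G'` the orbit projection (surjective, continuous,
admitting local continuous sections), `pr : Γ → [G] = Γ/G'` the quotient map, and let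
`a` be the induced action of `[G]` on `M'`, determined by `a (π' p) (pr γ) = π' (γ • p)`.
Then the induced action is proper: for every compact `K' ⊆ M'` the returning set
`{q ∈ [G] | K'·q ∩ K' ≠ ∅}` is relatively compact. -/
theorem stmt_9 {Γ : Type*} [Group Γ] [TopologicalSpace Γ] [IsTopologicalGroup Γ]
    {P : Type*} [TopologicalSpace P] [MulAction Γ P] [ContinuousSMul Γ P]
    (hproper : IsProperMap (fun pg : P × Γ => (pg.1, pg.2 • pg.1)))
    (G' : Subgroup Γ) [G'.Normal] (hG' : IsClosed (G' : Set Γ))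
    {M' : Type*} [TopologicalSpace M'] (π' : P → M')
    (hπcont : Continuous π') (hπsurj : Function.Surjective π')
    (hfib : ∀ p q : P, π' p = π' q ↔ ∃ g' ∈ G', g' • p = q)
    (hsec : ∀ m : M', ∃ U : Set M', IsOpen U ∧ m ∈ U ∧
      ∃ s : M' → P, ContinuousOn s U ∧ ∀ x ∈ U, π' (s x) = x)
    (a : M' → Γ ⧸ G' → M')
    (ha : ∀ (p : P) (γ : Γ), a (π' p) (QuotientGroup.mk γ) = π' (γ • p)) :
    ∀ K' : Set M', IsCompact K' →
      IsCompact (closure {q : Γ ⧸ G' | ∃ m ∈ K', a m q ∈ K'}) := by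
  classical
  haveI : IsClosed (G' : Set Γ) := hG'
  -- `π'` is a quotient map (thanks to local sections): sets with open preimage are open
  have hopen : ∀ W : Set M', IsOpen (π' ⁻¹' W) → IsOpen W := by
    intro W hW
    rw [isOpen_iff_forall_mem_open]
    intro x hx
    obtain ⟨U, hUopen, hxU, s, hscont, hsU⟩ := hsec x
    refine ⟨U ∩ s ⁻¹' (π' ⁻¹' W), ?_, hscont.isOpen_inter_preimage hUopen hW, hxU,
      by simpa [hsU x hxU] using hx⟩
    rintro u ⟨huU, hus⟩
    have : π' (s u) ∈ W := hus
    rwa [hsU u huU] at this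
  -- preimages of images under `π'` of open sets are open
  have hsat : ∀ V : Set P, IsOpen V → IsOpen (π' ⁻¹' (π' '' V)) := by
    intro V hV
    have : π' ⁻¹' (π' '' V) = ⋃ g : G', (fun p : P => (g : Γ) • p) ⁻¹' V := by
      ext z
      constructor
      · rintro ⟨v, hvV, hvz⟩
        obtain ⟨g, hgG, hgv⟩ := (hfib v z).mp hvz
        refine Set.mem_iUnion.mpr ⟨⟨g⁻¹, G'.inv_mem hgG⟩, ?_⟩
        simp only [Set.mem_preimage]
        rw [← hgv]
        simpa using hvV
      · intro hz
        obtain ⟨g, hg⟩ := Set.mem_iUnion.mp hz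
        exact ⟨(g : Γ) • z, hg, ((hfib ((g : Γ) • z) z).mpr ⟨(g : Γ)⁻¹, G'.inv_mem g.2,
          by simp⟩)⟩
    rw [this]
    exact isOpen_iUnion fun g => hV.preimage (continuous_const_smul _)
  -- the orbit equivalence relation of `G'` is closed in `P × P`
  have hrel : IsClosed {x : P × P | π' x.1 = π' x.2} := by
    have himg : (fun pg : P × Γ => (pg.1, pg.2 • pg.1)) '' (Set.univ ×ˢ (G' : Set Γ))
        = {x : P × P | π' x.1 = π' x.2} := by
      ext ⟨p, q⟩
      constructor
      · rintro ⟨⟨p', g⟩, ⟨-, hg⟩, h⟩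
        obtain ⟨rfl, rfl⟩ : p' = p ∧ g • p' = q := Prod.mk.injEq .. ▸ h
        exact (hfib _ _).mpr ⟨g, hg, rfl⟩
      · intro h
        obtain ⟨g, hg, hgp⟩ := (hfib p q).mp h
        exact ⟨(p, g), ⟨Set.mem_univ _, hg⟩, by simp [hgp]⟩
    rw [← himg]
    exact hproper.isClosedMap _ (isClosed_univ.prod hG')
  -- `M'` is Hausdorff
  haveI hT2 : T2Space M' := by
    refine { t2 := fun x y hxy => ?_ }
    obtain ⟨p, rfl⟩ := hπsurj x
    obtain ⟨q, rfl⟩ := hπsurj y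
    have hpq : (p, q) ∈ {x : P × P | π' x.1 = π' x.2}ᶜ := hxy
    obtain ⟨u, v, hu, hv, hpu, hqv, huv⟩ :=
      isOpen_prod_iff.mp hrel.isOpen_compl p q hpq
    refine ⟨π' '' u, π' '' v, hopen _ (hsat u hu), hopen _ (hsat v hv),
      ⟨p, hpu, rfl⟩, ⟨q, hqv, rfl⟩, ?_⟩
    rw [Set.disjoint_left]
    rintro z ⟨a', ha', rfl⟩ ⟨b', hb', hab⟩
    exact huv (Set.mk_mem_prod ha' hb') hab.symm
  intro K' hK'
  -- find a compact lift `K ⊆ P` of `K'`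
  have key : ∀ m ∈ K', ∃ V : Set M', IsOpen V ∧ m ∈ V ∧
      ∃ C : Set P, IsCompact C ∧ ∀ x ∈ V ∩ K', x ∈ π' '' C := by
    intro m hm
    obtain ⟨U, hUopen, hmU, s, hscont, hsU⟩ := hsec m
    have hcomp : IsCompact (K' \ U) := hK'.diff hUopen
    have hdisj : Disjoint ({m} : Set M') (K' \ U) := by
      simp only [Set.disjoint_singleton_left, Set.mem_diff, not_and, not_not]
      intro _; exact hmU
    obtain ⟨u, v, hu, hv, hmu, hKv, huv⟩ :=
      SeparatedNhds.of_isCompact_isCompact isCompact_singleton hcomp hdisj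
    have hcl : closure u ∩ K' ⊆ U := by
      intro x ⟨hxu, hxK⟩
      by_contra hxU
      have hxv : x ∈ v := hKv ⟨hxK, hxU⟩
      have husub : u ⊆ vᶜ := fun y hy hyv => Set.disjoint_left.mp huv hy hyv
      have : x ∈ vᶜ := closure_minimal husub hv.isClosed_compl hxu
      exact this hxv
    refine ⟨u, hu, hmu rfl, s '' (closure u ∩ K'), ?_, ?_⟩
    · exact (hK'.inter_left isClosed_closure).image_of_continuousOn (hscont.mono hcl)
    · intro x ⟨hxu, hxK⟩
      have hxcl : x ∈ closure u ∩ K' := ⟨subset_closure hxu, hxK⟩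
      exact ⟨s x, Set.mem_image_of_mem s hxcl, hsU x (hcl hxcl)⟩
  choose V hVopen hVmem C hCcomp hCcov using key
  obtain ⟨t, ht⟩ := hK'.elim_nhds_subcover' (fun m hm => V m hm)
    (fun m hm => (hVopen m hm).mem_nhds (hVmem m hm))
  set K : Set P := ⋃ x ∈ t, C x x.2 with hK
  have hKcomp : IsCompact K := t.isCompact_biUnion fun x _ => hCcomp x x.2
  have hKlift : ∀ m ∈ K', ∃ p ∈ K, π' p = m := by
    intro m hm
    obtain ⟨x, hxt, hmV⟩ := Set.mem_iUnion₂.mp (ht hm)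
    obtain ⟨p, hpC, hpm⟩ := hCcov x x.2 m ⟨hmV, hm⟩
    exact ⟨p, Set.mem_iUnion₂.mpr ⟨x, hxt, hpC⟩, hpm⟩
  -- the compact set `L ⊆ Γ` of elements almost returning `K` to itself
  set F : P × Γ → P × P := fun pg => (pg.1, pg.2 • pg.1) with hF
  have hLcomp : IsCompact (Prod.snd '' (F ⁻¹' (K ×ˢ K))) :=
    (hproper.isCompact_preimage (hKcomp.prod hKcomp)).image continuous_snd
  set L : Set Γ := Prod.snd '' (F ⁻¹' (K ×ˢ K)) with hL
  -- the returning set is contained in the image of `L`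
  have hsub : {q : Γ ⧸ G' | ∃ m ∈ K', a m q ∈ K'} ⊆ QuotientGroup.mk '' L := by
    rintro q ⟨m, hm, hq⟩
    obtain ⟨γ, rfl⟩ := QuotientGroup.mk_surjective q
    obtain ⟨p, hpK, rfl⟩ := hKlift m hm
    have h1 : π' (γ • p) ∈ K' := by rwa [ha p γ] at hq
    obtain ⟨p', hp'K, hp'⟩ := hKlift _ h1
    obtain ⟨h, hhG, hh⟩ := (hfib (γ • p) p').mp hp'.symm
    refine ⟨h * γ, ⟨(p, h * γ), ⟨hpK, ?_⟩, rfl⟩, ?_⟩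
    · show (h * γ) • p ∈ K
      rw [mul_smul, hh]; exact hp'K
    · have : (QuotientGroup.mk h : Γ ⧸ G') = 1 := (QuotientGroup.eq_one_iff h).mpr hhG
      calc (QuotientGroup.mk (h * γ) : Γ ⧸ G')
          = QuotientGroup.mk h * QuotientGroup.mk γ := rfl
        _ = QuotientGroup.mk γ := by rw [this, one_mul]
  have hLimg : IsCompact (QuotientGroup.mk '' L : Set (Γ ⧸ G')) :=
    hLcomp.image continuous_quot_mk
  exact hLimg.of_isClosed_subset isClosed_closure
    (closure_minimal hsub hLimg.isClosed)
end

section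
/- Let ρ : G × 𝒢 → 𝒢 be a compatible action of a Lie group G on a Lie groupoid 𝒢 ⇉ M. If the induced action of G/ker(ρ) on the unit manifold M is free and proper, then the induced action of G/ker(ρ) on 𝒢 is free and proper (i.e. ρ is pre-principal). -/
/-- Let `G` act on a (Lie) groupoid `𝒢` (arrows `A`, units `M ⊂ A` via `unit`, source
`s`), compatibly: the action preserves the units and commutes with the source map.
Let `N = ker ρ` be the kernel of the action.  If the induced action of `G/N` on the
unit manifold `M` is free and proper, then the induced action of `G/N` on `𝒢` is free
and proper (`ρ` is pre-principal). -/
theorem stmt_11 {G : Type*} [Group G] [TopologicalSpace G] [IsTopologicalGroup G]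
    {A M : Type*} [TopologicalSpace A] [TopologicalSpace M]
    [MulAction G A] [ContinuousSMul G A] [MulAction G M] [ContinuousSMul G M]
    (s : A → M) (unit : M → A) (hs : Continuous s)
    (hsu : ∀ x, s (unit x) = x)
    (hs_equiv : ∀ (g : G) (a : A), s (g • a) = g • s a)
    (hunit_equiv : ∀ (g : G) (x : M), g • unit x = unit (g • x)) :
    let N : Subgroup G := (MulAction.toPermHom G A).ker
    -- freeness of the induced `G/N`-action on `M` ...
    (∀ (x : M) (g : G), g • x = x → g ∈ N) →
    -- ... and properness on `M`
    (∀ K : Set M, IsCompact K →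
      IsCompact (closure
        (QuotientGroup.mk '' {g : G | ∃ x ∈ K, g • x ∈ K} : Set (G ⧸ N)))) →
    -- imply freeness and properness of the induced `G/N`-action on `𝒢`:
    (∀ (a : A) (g : G), g • a = a → g ∈ N) ∧
    (∀ K : Set A, IsCompact K →
      IsCompact (closure
        (QuotientGroup.mk '' {g : G | ∃ a ∈ K, g • a ∈ K} : Set (G ⧸ N)))) := by
  intro N hfree hproper
  constructor
  · intro a g hga
    apply hfree (s a) g
    rw [← hs_equiv, hga]
  · intro K hK
    have hsub : {g : G | ∃ a ∈ K, g • a ∈ K} ⊆ {g : G | ∃ x ∈ s '' K, g • x ∈ s '' K} := by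
      rintro g ⟨a, haK, hgaK⟩
      exact ⟨s a, ⟨a, haK, rfl⟩, ⟨g • a, hgaK, hs_equiv g a⟩⟩
    have hbig := hproper (s '' K) (hK.image hs)
    exact hbig.of_isClosed_subset isClosed_closure
      (closure_mono (Set.image_mono hsub))
end
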